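/- Let k ∈ ℂ with Im k > 0 and let x ∈ ℝ. Then the function p ↦ e^{ipx}/(p² − k²) is integrable on ℝ and ∫_ℝ e^{ipx}/(p² − k²) dp = (π i / k) · e^{i k |x|}. Equivalently, (1/2π) ∫_ℝ e^{ipx}/(p² − k²) dp = (i/2) · e^{i k |x|}/k, the Green function of the one-dimensional Laplacian at energy k². -/

import Mathlib

open MeasureTheory Complex Set Filter
open scoped FourierTransform Real Topology

/-- Exponential with negative real-part coefficient is integrable on `(0,∞)`. -/
lemma gf_cexp_integrableOn_Ioi {c : ℂ} (hc : c.re < 0) :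
    IntegrableOn (fun t : ℝ => Complex.exp (c * t)) (Ioi 0) := by
  have h : IntegrableOn (fun t : ℝ => Real.exp (-(-c.re) * t)) (Ioi (0:ℝ)) :=
    exp_neg_integrableOn_Ioi 0 (by linarith)
  refine Integrable.mono' h ?_ ?_
  · exact (Complex.continuous_exp.comp (continuous_const.mul Complex.continuous_ofReal)).aestronglyMeasurable
  · filter_upwards with t
    simp [Complex.norm_exp, Complex.mul_re]

lemma gf_integral_cexp_Ioi {c : ℂ} (hc : c.re < 0) :
    ∫ t in Ioi (0:ℝ), Complex.exp (c * t) = -c⁻¹ := by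
  have hc0 : c ≠ 0 := fun h => by simp [h] at hc
  have hd : ∀ t ∈ Ici (0:ℝ),
      HasDerivAt (fun s : ℝ => Complex.exp (c * s) / c) (Complex.exp (c * t)) t := by
    intro t _
    have h1 : HasDerivAt (fun z : ℂ => Complex.exp (c * z)) (c * Complex.exp (c * t)) t := by
      have := (Complex.hasDerivAt_exp (c * (t:ℂ))).comp (t:ℂ)
        ((hasDerivAt_id (t : ℂ)).const_mul c)
      simpa [Function.comp_def, mul_comm] using this
    have h2 := h1.comp_ofReal
    have := h2.div_const c
    simpa [mul_div_assoc, mul_div_cancel_left₀ _ hc0] using this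
  have htend : Tendsto (fun t : ℝ => Complex.exp (c * t) / c) atTop (𝓝 0) := by
    rw [tendsto_zero_iff_norm_tendsto_zero]
    have hnorm : (fun t : ℝ => ‖Complex.exp (c * t) / c‖)
        = fun t : ℝ => Real.exp (c.re * t) / ‖c‖ := by
      funext t
      simp [Complex.norm_exp, Complex.mul_re, map_div₀]
    rw [hnorm]
    have : Tendsto (fun t : ℝ => c.re * t) atTop atBot :=
      tendsto_id.const_mul_atTop_of_neg hc
    simpa using (Real.tendsto_exp_atBot.comp this).div_const (‖c‖)
  have := integral_Ioi_of_hasDerivAt_of_tendsto' hd (gf_cexp_integrableOn_Ioi hc) htend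
  simpa using this

lemma gf_ne {κ : ℂ} (hκ : 0 < κ.im) (p : ℝ) : (p : ℂ) ^ 2 - κ ^ 2 ≠ 0 := by
  intro h
  have h2 : ((p : ℂ) - κ) * ((p : ℂ) + κ) = 0 := by ring_nf; linear_combination h
  rcases mul_eq_zero.mp h2 with h3 | h3
  · have : ((p : ℂ) - κ).im = 0 := by rw [h3]; simp
    simp [Complex.sub_im] at this
    linarith
  · have : ((p : ℂ) + κ).im = 0 := by rw [h3]; simp
    simp [Complex.add_im] at this
    linarith

lemma gf_key_integrable {κ : ℂ} (hκ : 0 < κ.im) {ψ : ℝ → ℂ} (hψ : Continuous ψ)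
    (hb : ∀ p, ‖ψ p‖ ≤ 1) :
    Integrable (fun p : ℝ => ψ p / ((p : ℂ) ^ 2 - κ ^ 2)) := by
  have hcont : Continuous (fun p : ℝ => ψ p / ((p : ℂ) ^ 2 - κ ^ 2)) := by
    apply hψ.div
    · continuity
    · exact fun p => gf_ne hκ p
  set R : ℝ := Real.sqrt (1 + 2 * ‖κ‖ ^ 2) with hR
  have hbound : ∀ p : ℝ, 1 + 2 * ‖κ‖ ^ 2 ≤ p ^ 2 →
      ‖ψ p / ((p : ℂ) ^ 2 - κ ^ 2)‖ ≤ 4 * ‖(1 + p ^ 2)⁻¹‖ := by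
    intro p hp
    have ha : 0 ≤ ‖κ‖ ^ 2 := sq_nonneg _
    have hD : (1 + p ^ 2) / 4 ≤ ‖(p : ℂ) ^ 2 - κ ^ 2‖ := by
      have h1 := norm_sub_norm_le ((p : ℂ) ^ 2) (κ ^ 2)
      have h2 : ‖((p : ℂ) ^ 2)‖ = p ^ 2 := by
        rw [norm_pow, Complex.norm_real, Real.norm_eq_abs, _root_.sq_abs]
      have h3 : ‖κ ^ 2‖ = ‖κ‖ ^ 2 := by
        rw [norm_pow]
      rw [h2, h3] at h1
      nlinarith [h1]
    have hDpos : (0 : ℝ) < ‖(p : ℂ) ^ 2 - κ ^ 2‖ := by nlinarith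
    have h1p : (0 : ℝ) < 1 + p ^ 2 := by positivity
    rw [norm_div]
    have : ‖ψ p‖ / ‖(p : ℂ) ^ 2 - κ ^ 2‖ ≤ 1 / ((1 + p ^ 2) / 4) := by
      apply div_le_div₀ (by positivity) (hb p) (by positivity)
      simpa using hD
    calc ‖ψ p‖ / ‖(p : ℂ) ^ 2 - κ ^ 2‖ ≤ 1 / ((1 + p ^ 2) / 4) := this
      _ = 4 * ‖(1 + p ^ 2)⁻¹‖ := by
          rw [Real.norm_eq_abs, abs_of_pos (by positivity)]
          field_simp
  have hRnn : 0 ≤ R := Real.sqrt_nonneg _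
  have hIAF : IntegrableAtFilter (fun p : ℝ => (1 + p ^ 2)⁻¹) atBot volume :=
    ⟨univ, univ_mem, integrable_inv_one_add_sq.integrableOn⟩
  have hIAF' : IntegrableAtFilter (fun p : ℝ => (1 + p ^ 2)⁻¹) atTop volume :=
    ⟨univ, univ_mem, integrable_inv_one_add_sq.integrableOn⟩
  refine hcont.locallyIntegrable.integrable_of_isBigO_atBot_atTop
    (g := fun p : ℝ => (1 + p ^ 2)⁻¹) ?_ hIAF (g' := fun p : ℝ => (1 + p ^ 2)⁻¹) ?_ hIAF'
  · refine Asymptotics.IsBigO.of_bound 4 ?_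
    filter_upwards [eventually_le_atBot (-R)] with p hp
    refine hbound p ?_
    have h1 : R ≤ -p := by linarith
    have h2 : R ^ 2 ≤ (-p) ^ 2 := by nlinarith
    have h3 : R ^ 2 = 1 + 2 * ‖κ‖ ^ 2 := Real.sq_sqrt (by positivity)
    nlinarith
  · refine Asymptotics.IsBigO.of_bound 4 ?_
    filter_upwards [eventually_ge_atTop R] with p hp
    refine hbound p ?_
    have h2 : R ^ 2 ≤ p ^ 2 := by nlinarith
    have h3 : R ^ 2 = 1 + 2 * ‖κ‖ ^ 2 := Real.sq_sqrt (by positivity)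
    nlinarith

lemma gf_f_integrable {k : ℂ} (hk : 0 < k.im) :
    Integrable (fun y : ℝ => Complex.exp (Complex.I * k * |y|)) := by
  have hcont : Continuous (fun y : ℝ => Complex.exp (Complex.I * k * |y|)) := by
    continuity
  refine hcont.locallyIntegrable.integrable_of_isBigO_atTop_of_norm_isNegInvariant
    (g := fun y : ℝ => Real.exp (-k.im * y)) ?_ ?_ ?_
  · filter_upwards with y
    simp [Function.comp, abs_neg]
  · refine Asymptotics.IsBigO.of_bound 1 ?_
    filter_upwards [eventually_ge_atTop (0:ℝ)] with y hy
    have : |y| = y := abs_of_nonneg hy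
    simp [Complex.norm_exp, Complex.mul_re, Complex.mul_im, this,
      Real.norm_eq_abs, abs_of_pos (Real.exp_pos _), mul_comm]
  · exact ⟨Ioi 0, Ioi_mem_atTop 0, exp_neg_integrableOn_Ioi 0 hk⟩

lemma gf_fourier {k : ℂ} (hk : 0 < k.im) (ξ : ℝ) :
    𝓕 (fun y : ℝ => Complex.exp (Complex.I * k * |y|)) ξ
      = 2 * Complex.I * k / (k ^ 2 - (2 * π * ξ) ^ 2) := by
  set f : ℝ → ℂ := fun y => Complex.exp (Complex.I * k * |y|) with hf
  set h : ℝ → ℂ := fun y => Complex.exp (↑(-2 * π * y * ξ) * Complex.I) * f y with hh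
  have hF : 𝓕 f ξ = ∫ y : ℝ, h y := by
    rw [Real.fourier_real_eq_integral_exp_smul]
    simp [hh, smul_eq_mul]
  have hnorm : ∀ y : ℝ, ‖h y‖ = ‖f y‖ := by
    intro y
    rw [hh]
    simp only [norm_mul]
    have : ‖Complex.exp (↑(-2 * π * y * ξ) * Complex.I)‖ = 1 := by
      exact Complex.norm_exp_ofReal_mul_I _
    rw [this, one_mul]
  have hint : Integrable h := by
    refine (gf_f_integrable hk).norm.mono' ?_ ?_
    · apply Continuous.aestronglyMeasurable
      apply Continuous.mul
      · exact Complex.continuous_exp.comp (by continuity)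
      · continuity
    · filter_upwards with y
      rw [hnorm y]
  set a : ℂ := Complex.I * (k - 2 * π * ξ) with hadef
  set b : ℂ := Complex.I * (k + 2 * π * ξ) with hbdef
  have ha : a.re < 0 := by
    simp [hadef, Complex.mul_re, Complex.sub_im]
    linarith
  have hb : b.re < 0 := by
    simp [hbdef, Complex.mul_re, Complex.add_im]
    linarith
  have hIoi : ∫ y in Ioi (0:ℝ), h y = -a⁻¹ := by
    rw [setIntegral_congr_fun measurableSet_Ioi
      (g := fun y : ℝ => Complex.exp (a * y)) ?_]
    · exact gf_integral_cexp_Ioi ha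
    · intro y hy
      have hy' : |y| = y := abs_of_pos hy
      rw [hh, hf]
      simp only [hy']
      rw [← Complex.exp_add]
      congr 1
      rw [hadef]
      push_cast
      ring
  have hIic : ∫ y in Iic (0:ℝ), h y = -b⁻¹ := by
    have e1 : ∫ y in Iic (0:ℝ), h y
        = ∫ y in Iic (0:ℝ), (fun z : ℝ => Complex.exp (b * z)) (-y) := by
      refine setIntegral_congr_fun measurableSet_Iic ?_
      intro y hy
      have hy' : |y| = -y := abs_of_nonpos hy
      rw [hh, hf]
      simp only [hy']
      rw [← Complex.exp_add]
      congr 1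
      rw [hbdef]
      push_cast
      ring
    rw [e1, _root_.integral_comp_neg_Iic 0 (fun z : ℝ => Complex.exp (b * z))]
    rw [neg_zero]
    exact gf_integral_cexp_Ioi hb
  have hsum := intervalIntegral.integral_Iic_add_Ioi (b := (0:ℝ)) (hint.integrableOn) (hint.integrableOn)
  rw [hF, ← hsum, hIic, hIoi]
  have hk1 : k - 2 * π * ξ ≠ 0 := by
    intro hcon
    have : (k - 2 * π * ξ).im = 0 := by rw [hcon]; simp
    simp [Complex.sub_im] at this
    linarith
  have hk2 : k + 2 * π * ξ ≠ 0 := by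
    intro hcon
    have : (k + 2 * π * ξ).im = 0 := by rw [hcon]; simp
    simp [Complex.add_im] at this
    linarith
  have hden : k ^ 2 - ((2:ℂ) * π * ξ) ^ 2 ≠ 0 := by
    intro hcon
    have : (k - 2 * π * ξ) * (k + 2 * π * ξ) = 0 := by linear_combination hcon
    rcases mul_eq_zero.mp this with h | h
    exacts [hk1 h, hk2 h]
  rw [hadef, hbdef]
  have hden' : (k:ℂ) ^ 2 - (2 * (π:ℂ) * (ξ:ℂ)) ^ 2 ≠ 0 := hden
  field_simp
  rw [eq_div_iff (by contrapose! hden'; linear_combination hden')]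
  linear_combination (-2 * k * (k + 2 * π * ξ) * (k - 2 * π * ξ)) * Complex.I_sq

/-- the Green function of the one-dimensional Laplacian:
for `Im k > 0`, `∫_ℝ e^{ipx}/(p² − k²) dp = (πi/k) e^{ik|x|}`. -/
theorem green_function_one_dim
    (k : ℂ) (hk : 0 < k.im) (x : ℝ) :
    Integrable (fun p : ℝ => Complex.exp (Complex.I * p * x) / (p ^ 2 - k ^ 2)) ∧
    (∫ p : ℝ, Complex.exp (Complex.I * p * x) / (p ^ 2 - k ^ 2))
      = (Real.pi * Complex.I / k) * Complex.exp (Complex.I * k * |x|) ∧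
    (1 / (2 * Real.pi)) *
      (∫ p : ℝ, Complex.exp (Complex.I * p * x) / (p ^ 2 - k ^ 2))
      = (Complex.I / 2) * Complex.exp (Complex.I * k * |x|) / k := by
  have hkne : k ≠ 0 := fun h => by simp [h] at hk
  have hπ : (π : ℝ) ≠ 0 := Real.pi_ne_zero
  have hψc : Continuous (fun p : ℝ => Complex.exp (Complex.I * p * x)) := by
    continuity
  have hψb : ∀ p : ℝ, ‖Complex.exp (Complex.I * (p : ℂ) * x)‖ ≤ 1 := by
    intro p
    simp [Complex.norm_exp, Complex.mul_re, Complex.mul_im]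
  have hG : Integrable (fun p : ℝ => Complex.exp (Complex.I * p * x) / ((p:ℂ) ^ 2 - k ^ 2)) :=
    gf_key_integrable hk hψc hψb
  set f : ℝ → ℂ := fun y => Complex.exp (Complex.I * k * |y|) with hfdef
  have hfc : Continuous f := by continuity
  have hfi : Integrable f := gf_f_integrable hk
  have hFeq : 𝓕 f = fun ξ : ℝ => 2 * Complex.I * k / (k ^ 2 - (2 * π * ξ) ^ 2) :=
    funext (gf_fourier hk)
  have hκim : 0 < (k * ((2 * π : ℝ) : ℂ)⁻¹).im := by
    rw [← Complex.ofReal_inv]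
    simp [Complex.mul_im]
    positivity
  set κ : ℂ := k * ((2 * π : ℝ) : ℂ)⁻¹ with hκdef
  have hden : ∀ ξ : ℝ, k ^ 2 - ((2:ℂ) * π * ξ) ^ 2 ≠ 0 := by
    intro ξ
    have := gf_ne hk (2 * π * ξ)
    intro hcon
    apply this
    push_cast
    linear_combination -hcon
  have hFi : Integrable (𝓕 f) := by
    rw [hFeq]
    have h0 := gf_key_integrable hκim (ψ := fun _ : ℝ => (1:ℂ)) continuous_const
      (by intro p; simp)
    refine (h0.const_mul (-2 * Complex.I * k * (((2 * π : ℝ) : ℂ)⁻¹) ^ 2)).congr ?_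
    filter_upwards with ξ
    have h1 : ((ξ:ℂ) ^ 2 - κ ^ 2) ≠ 0 := gf_ne hκim ξ
    have h2 := hden ξ
    rw [hκdef] at h1 ⊢
    have hπc : ((2 * π : ℝ) : ℂ) ≠ 0 := by
      rw [Complex.ofReal_ne_zero]
      positivity
    push_cast at h1 hπc ⊢
    rw [mul_one_div, div_eq_div_iff h1 h2]
    field_simp
    ring
  have hinv := hfi.fourierInv_fourier_eq hFi (hfc.continuousAt (x := x))
  rw [Real.fourierInv_eq_fourier_neg, hFeq,
    Real.fourier_real_eq_integral_exp_smul] at hinv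
  have hinv' : ∫ ξ : ℝ, (-2 * Complex.I * k) *
      ((fun p : ℝ => Complex.exp (Complex.I * p * x) / ((p:ℂ) ^ 2 - k ^ 2)) (2 * π * ξ))
      = f x := by
    rw [← hinv]
    refine integral_congr_ae (Filter.Eventually.of_forall fun ξ => ?_)
    have h2 := hden ξ
    have h3 : ((2:ℂ) * π * ξ) ^ 2 - k ^ 2 ≠ 0 := by
      intro hcon
      exact h2 (by linear_combination -hcon)
    simp only [smul_eq_mul]
    rw [show ((-2 * π * ξ * -x : ℝ) : ℂ) * Complex.I
        = Complex.I * ((2 * π * ξ : ℝ) : ℂ) * x by push_cast; ring]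
    rw [show ((2 * π * ξ : ℝ) : ℂ) = 2 * (π : ℂ) * (ξ : ℂ) by push_cast; ring]
    field_simp
    ring_nf
    rw [← inv_neg]
    ring
  rw [MeasureTheory.integral_const_mul] at hinv'
  rw [MeasureTheory.Measure.integral_comp_mul_left
    (fun p : ℝ => Complex.exp (Complex.I * p * x) / ((p:ℂ) ^ 2 - k ^ 2)) (2 * π)] at hinv'
  rw [abs_of_pos (by positivity : (0:ℝ) < (2 * π)⁻¹), Complex.real_smul] at hinv'
  have hπc : ((2 * π : ℝ) : ℂ) ≠ 0 := by
    rw [Complex.ofReal_ne_zero]; positivity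
  have key : (∫ p : ℝ, Complex.exp (Complex.I * p * x) / ((p:ℂ) ^ 2 - k ^ 2))
      = (Real.pi * Complex.I / k) * f x := by
    have hπC : ((π : ℝ) : ℂ) ≠ 0 := by
      rw [Complex.ofReal_ne_zero]; exact hπ
    push_cast at hinv'
    field_simp at hinv'
    rw [div_mul_eq_mul_div, eq_div_iff hkne]
    linear_combination Complex.I * hinv' +
      (k * (∫ (y : ℝ), Complex.exp (Complex.I * y * x) / ((y:ℂ) ^ 2 - k ^ 2))) * Complex.I_sq
  refine ⟨hG, key, ?_⟩
  rw [key]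
  rw [hfdef]
  have hπC : ((π : ℝ) : ℂ) ≠ 0 := by
    rw [Complex.ofReal_ne_zero]; exact hπ
  push_cast
  field_simp
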